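/- Let t be a nonnegative integer. The (i,j)-th entry of the matrix M(t) := U(t)·S(t)·S(t)^T·U(t) equals (-1)^{i+j}·binom(i+j, i), for all 0 ≤ i, j ≤ t. -/
import Mathlib


open Matrix

/-- The backward identity matrix `U(t)` of order `t+1`: entry `(i,j)` is `δ_{i+j,t}`. -/
def Umat (t : ℕ) : Matrix (Fin (t+1)) (Fin (t+1)) ℤ :=
  fun i j => if (i : ℕ) + (j : ℕ) = t then 1 else 0

/-- The matrix `S(t)` of order `t+1`: entry `(i,j)` is `(-1)^(j-i) * C(t-i, j-i)`,
where the binomial coefficient is `0` when `j < i`. -/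
def Smat (t : ℕ) : Matrix (Fin (t+1)) (Fin (t+1)) ℤ :=
  fun i j =>
    if (i : ℕ) ≤ (j : ℕ) then
      (-1) ^ ((j : ℕ) - (i : ℕ)) * (Nat.choose (t - (i : ℕ)) ((j : ℕ) - (i : ℕ)) : ℤ)
    else 0

/-- The forward shift matrix `T(t)` of order `t+1`: entry `(i,j)` is `δ_{j-i,1}`. -/
def Tmat (t : ℕ) : Matrix (Fin (t+1)) (Fin (t+1)) ℤ :=
  fun i j => if (j : ℕ) = (i : ℕ) + 1 then 1 else 0

/-- The matrix `M(t) := U(t) * S(t) * S(t)ᵀ * U(t)`. -/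
def Mmat (t : ℕ) : Matrix (Fin (t+1)) (Fin (t+1)) ℤ :=
  Umat t * Smat t * (Smat t)ᵀ * Umat t

/-- The row vector `β(s;t) = (C(s,0), C(s,1), ..., C(s,t))`. -/
def betaVec (s t : ℕ) : Fin (t+1) → ℤ := fun j => (Nat.choose s (j : ℕ) : ℤ)

lemma Umat_mul_apply (t : ℕ) (A : Matrix (Fin (t+1)) (Fin (t+1)) ℤ) (i j : Fin (t+1)) :
    (Umat t * A) i j = A i.rev j := by
  rw [mul_apply, Finset.sum_eq_single i.rev]
  · simp [Umat, Fin.val_rev, Nat.add_sub_cancel' (Nat.lt_succ_iff.1 i.isLt)]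
  · intro k _ hk
    have : (i : ℕ) + (k : ℕ) ≠ t := by
      intro h
      apply hk
      have : (k : ℕ) = t - i := by omega
      ext
      simp only [Fin.val_rev]
      omega
    simp [Umat, this]
  · simp

lemma mul_Umat_apply (t : ℕ) (A : Matrix (Fin (t+1)) (Fin (t+1)) ℤ) (i j : Fin (t+1)) :
    (A * Umat t) i j = A i j.rev := by
  rw [mul_apply, Finset.sum_eq_single j.rev]
  · simp [Umat, Fin.val_rev]
    intro h; exfalso; apply h; omega
  · intro k _ hk
    have : (k : ℕ) + (j : ℕ) ≠ t := by
      intro h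
      apply hk
      ext
      simp [Fin.val_rev]; omega
    simp [Umat, this]
  · simp

lemma sum_choose_mul_choose (i j t : ℕ) (hj : j ≤ t) :
    ∑ r ∈ Finset.range (t+1), Nat.choose i r * Nat.choose j r = Nat.choose (i+j) i := by
  rw [Nat.choose_symm_add, Nat.add_choose_eq,
    Finset.Nat.sum_antidiagonal_eq_sum_range_succ_mk]
  rw [← Finset.sum_subset (Finset.range_subset_range.2 (by omega : j + 1 ≤ t + 1))]
  · apply Finset.sum_congr rfl
    intro r hr
    rw [Nat.choose_symm (by simpa [Nat.lt_succ_iff] using hr)]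
  · intro r _ hr
    simp only [Finset.mem_range, Nat.lt_succ_iff, not_le] at hr
    simp [Nat.choose_eq_zero_of_lt hr]

/-- The `(i,j)`-th entry of `M(t) = U(t)·S(t)·S(t)ᵀ·U(t)` equals `(-1)^(i+j) · C(i+j, i)`. -/
theorem Mmat_entry (t : ℕ) (i j : Fin (t+1)) :
    Mmat t i j = (-1) ^ ((i : ℕ) + (j : ℕ)) * (Nat.choose ((i : ℕ) + (j : ℕ)) (i : ℕ) : ℤ) := by
  have hi : (i : ℕ) ≤ t := Nat.lt_succ_iff.1 i.isLt
  have hj : (j : ℕ) ≤ t := Nat.lt_succ_iff.1 j.isLt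
  have h1 : Mmat t i j = ∑ k, Smat t i.rev k * Smat t j.rev k := by
    rw [Mmat, mul_Umat_apply, mul_apply]
    apply Finset.sum_congr rfl
    intro k _
    rw [Umat_mul_apply, transpose_apply]
  rw [h1, ← Fintype.sum_bijective Fin.rev Fin.rev_bijective
      (fun k => Smat t i.rev k.rev * Smat t j.rev k.rev)
      (fun k => Smat t i.rev k * Smat t j.rev k)
      (fun k => by simp only [Fin.rev_rev])]
  have key : ∀ k : Fin (t+1),
      Smat t i.rev k.rev * Smat t j.rev k.rev
        = (-1) ^ ((i : ℕ) + (j : ℕ)) *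
            ((Nat.choose (i : ℕ) (k : ℕ) : ℤ) * (Nat.choose (j : ℕ) (k : ℕ) : ℤ)) := by
    intro k
    have hk : (k : ℕ) ≤ t := Nat.lt_succ_iff.1 k.isLt
    simp only [Smat, Fin.val_rev]
    have hir : t + 1 - ((i : ℕ) + 1) = t - i := by omega
    have hjr : t + 1 - ((j : ℕ) + 1) = t - j := by omega
    have hkr : t + 1 - ((k : ℕ) + 1) = t - k := by omega
    rw [hir, hjr, hkr]
    by_cases hki : (k : ℕ) ≤ (i : ℕ)
    · by_cases hkj : (k : ℕ) ≤ (j : ℕ)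
      · have c1 : t - (i : ℕ) ≤ t - (k : ℕ) := by omega
        have c2 : t - (j : ℕ) ≤ t - (k : ℕ) := by omega
        have d1 : t - (k : ℕ) - (t - (i : ℕ)) = (i : ℕ) - k := by omega
        have d2 : t - (k : ℕ) - (t - (j : ℕ)) = (j : ℕ) - k := by omega
        have e1 : t - (t - (i : ℕ)) = (i : ℕ) := by omega
        have e2 : t - (t - (j : ℕ)) = (j : ℕ) := by omega
        rw [if_pos c1, if_pos c2, d1, d2, e1, e2,
          Nat.choose_symm hki, Nat.choose_symm hkj]
        have hsign : ((-1 : ℤ)) ^ ((i : ℕ) - k) * (-1) ^ ((j : ℕ) - k)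
            = (-1) ^ ((i : ℕ) + (j : ℕ)) := by
          have h2 : (i : ℕ) + (j : ℕ) = ((i : ℕ) - k) + ((j : ℕ) - k) + 2 * k := by omega
          rw [h2, pow_add, pow_add, pow_mul]
          norm_num
        rw [← hsign]
        ring
      · have c2 : ¬ (t - (j : ℕ) ≤ t - (k : ℕ)) := by omega
        rw [if_neg c2]
        simp [Nat.choose_eq_zero_of_lt (by omega : (j : ℕ) < k)]
    · have c1 : ¬ (t - (i : ℕ) ≤ t - (k : ℕ)) := by omega
      rw [if_neg c1]
      simp [Nat.choose_eq_zero_of_lt (by omega : (i : ℕ) < k)]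
  rw [Finset.sum_congr rfl (fun k _ => key k), ← Finset.mul_sum]
  congr 1
  rw [Fin.sum_univ_eq_sum_range (fun r => ((Nat.choose (i : ℕ) r : ℤ) * (Nat.choose (j : ℕ) r : ℤ)))]
  rw [← sum_choose_mul_choose (i : ℕ) (j : ℕ) t hj]
  push_cast
  rfl
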